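/- arXiv:2506.07487 — 6 statements merged into one kernel-verified Lean document; each statement's English description precedes it below -/
import Mathlib

section
/- For the pair renewal shift transition matrix A, defined by A(1,n) = A(2,2n) = A(n+1,n) = 1 for all n ≥ 1 and zero otherwise, the sequence of columns of A has exactly two limit points in {0,1}^ℕ: the vector R₁ with (R₁)_j = 1 iff j ∈ {1,2}, and the vector R₂ with (R₂)_j = 1 iff j = 1. -/
/-- For the pair renewal shift transition matrix, the sequence of columns has
exactly two limit points in `{0,1}^ℕ`: `R₁` with `(R₁) j = 1` iff `j ∈ {1,2}`,
and `R₂` with `(R₂) j = 1` iff `j = 1`. -/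
theorem pair_renewal_columns_two_limit_points
    (A : ℕ → ℕ → Bool)
    (hA : ∀ i j, A i j = true ↔
      (1 ≤ j ∧ (i = 1 ∨ i = j + 1 ∨ (i = 2 ∧ ∃ k, 1 ≤ k ∧ j = 2 * k)))) :
    {R : ℕ → Bool | ∃ φ : ℕ → ℕ, StrictMono φ ∧
        Filter.Tendsto (fun k => fun i => A i (φ k + 1)) Filter.atTop (nhds R)}
      = {fun j => decide (j = 1 ∨ j = 2), fun j => decide (j = 1)} := by
  ext R
  simp only [Set.mem_setOf_eq, Set.mem_insert_iff, Set.mem_singleton_iff]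
  constructor
  · rintro ⟨φ, hφ, hT⟩
    have hptw : ∀ i, Filter.Tendsto (fun k => A i (φ k + 1)) Filter.atTop (nhds (R i)) :=
      fun i => tendsto_pi_nhds.mp hT i
    have hev : ∀ i, ∀ᶠ k in Filter.atTop, A i (φ k + 1) = R i := fun i =>
      (hptw i) ((isOpen_discrete {R i}).mem_nhds rfl)
    have h1 : R 1 = true := by
      obtain ⟨k, hk⟩ := (hev 1).exists
      rw [← hk, hA]
      exact ⟨Nat.le_add_left 1 _, Or.inl rfl⟩
    have h3 : ∀ i, i ≠ 1 → i ≠ 2 → R i = false := by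
      intro i hi1 hi2
      have hf : ∀ᶠ k in Filter.atTop, A i (φ k + 1) = false := by
        filter_upwards [Filter.eventually_ge_atTop i] with k hk
        have hφk : k ≤ φ k := hφ.le_apply
        rw [← Bool.not_eq_true, hA]
        rintro ⟨-, h | h | ⟨h2, -⟩⟩
        · exact hi1 h
        · omega
        · exact hi2 h2
      obtain ⟨k, hk1, hk2⟩ := ((hev i).and hf).exists
      rw [← hk1, hk2]
    cases h2 : R 2 with
    | true =>
      left; funext i
      by_cases hi1 : i = 1
      · subst hi1; simp [h1]
      · by_cases hi2 : i = 2
        · subst hi2; simp [h2]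
        · simp [h3 i hi1 hi2, hi1, hi2]
    | false =>
      right; funext i
      by_cases hi1 : i = 1
      · subst hi1; simp [h1]
      · by_cases hi2 : i = 2
        · subst hi2; simp [h2]
        · simp [h3 i hi1 hi2, hi1]
  · rintro (rfl | rfl)
    · refine ⟨fun k => 2 * k + 1, strictMono_nat_of_lt_succ
        (fun n => by show 2 * n + 1 < 2 * (n + 1) + 1; omega), ?_⟩
      rw [tendsto_pi_nhds]
      intro i
      refine Filter.Tendsto.congr' ?_ tendsto_const_nhds
      filter_upwards [Filter.eventually_ge_atTop i] with k hk
      show decide (i = 1 ∨ i = 2) = A i (2 * k + 1 + 1)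
      symm
      rcases Decidable.em (i = 1 ∨ i = 2) with h12 | h12
      · rw [decide_eq_true h12, hA]
        refine ⟨by omega, ?_⟩
        rcases h12 with rfl | rfl
        · exact Or.inl rfl
        · exact Or.inr (Or.inr ⟨rfl, k + 1, by omega, by ring⟩)
      · rw [decide_eq_false h12, ← Bool.not_eq_true, hA]
        rintro ⟨-, h | h | ⟨h2, -⟩⟩
        · exact h12 (Or.inl h)
        · omega
        · exact h12 (Or.inr h2)
    · refine ⟨fun k => 2 * k + 2, strictMono_nat_of_lt_succ
        (fun n => by show 2 * n + 2 < 2 * (n + 1) + 2; omega), ?_⟩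
      rw [tendsto_pi_nhds]
      intro i
      refine Filter.Tendsto.congr' ?_ tendsto_const_nhds
      filter_upwards [Filter.eventually_ge_atTop i] with k hk
      show decide (i = 1) = A i (2 * k + 2 + 1)
      symm
      rcases Decidable.em (i = 1) with h1 | h1
      · rw [decide_eq_true h1, hA]
        exact ⟨by omega, Or.inl h1⟩
      · rw [decide_eq_false h1, ← Bool.not_eq_true, hA]
        rintro ⟨-, h | h | ⟨-, m, hm1, hm2⟩⟩
        · exact h1 h
        · omega
        · omega
end

section
/- Let e_{β,F} = T_β(∏_{j∈F}Q_j)T_β* with (β,F), (γ,G) admissible pairs where γ is a prefix of β. Then e_{β,F} e_{γ,G} = e_{β,F∪G} if β = γ; e_{β,F} e_{γ,G} = e_{β,F} if β ≠ γ and A(k, β_{|γ|}) = 1 for all k ∈ G; and e_{β,F} e_{γ,G} = 0 otherwise. Consequently, the linear span of the projections e_{β,F} is closed under multiplication. -/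
noncomputable section

/-- The countable Markov shift `Σ_A` over alphabet `ℕ` with transition matrix `A`. -/
def SigmaA (A : ℕ → ℕ → Bool) : Type :=
  {x : ℕ → ℕ // ∀ i, A (x i) (x (i + 1)) = true}

instance : Fact ((1 : ENNReal) ≤ 2) := ⟨one_le_two⟩

/-- The Hilbert space `ℓ²(Σ_A)`. -/
abbrev HilbSA (A : ℕ → ℕ → Bool) := lp (fun _ : SigmaA A => ℂ) 2

noncomputable instance (A : ℕ → ℕ → Bool) : DecidableEq (SigmaA A) :=
  Classical.decEq _

/-- The canonical basis vector `δ_ω` of `ℓ²(Σ_A)`. -/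
def deltaVec (A : ℕ → ℕ → Bool) (ω : SigmaA A) : HilbSA A := lp.single 2 ω 1

/-- The sequence `sω` obtained by prepending an admissible symbol `s` to `ω`. -/
def consSeq (A : ℕ → ℕ → Bool) (s : ℕ) (ω : SigmaA A) (h : A s (ω.1 0) = true) :
    SigmaA A :=
  ⟨fun n => Nat.rec s (fun k _ => ω.1 k) n, by
    intro i
    cases i with
    | zero => exact h
    | succ k => exact ω.2 k⟩

/-- A finite word is admissible when its cylinder in `Σ_A` is non-empty. -/
def AdmissibleWord (A : ℕ → ℕ → Bool) {n : ℕ} (γ : Fin n → ℕ) : Prop :=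
  ∃ ω : SigmaA A, ∀ k : Fin n, ω.1 k.1 = γ k

/-- The operator `T_γ = T_{γ₀} ⋯ T_{γ_{n-1}}` associated with a finite word `γ`. -/
def Tword (A : ℕ → ℕ → Bool) (T : ℕ → HilbSA A →L[ℂ] HilbSA A)
    {n : ℕ} (γ : Fin n → ℕ) : HilbSA A →L[ℂ] HilbSA A :=
  (List.ofFn fun k => T (γ k)).prod

/-- The projection `Q_s = T_s* T_s`. -/
def Qproj (A : ℕ → ℕ → Bool) (T : ℕ → HilbSA A →L[ℂ] HilbSA A) (s : ℕ) :
    HilbSA A →L[ℂ] HilbSA A :=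
  ContinuousLinearMap.adjoint (T s) * T s

/-- The product `∏_{j ∈ F} Q_j` over a finite set of symbols. -/
def Qprod (A : ℕ → ℕ → Bool) (T : ℕ → HilbSA A →L[ℂ] HilbSA A) (F : Finset ℕ) :
    HilbSA A →L[ℂ] HilbSA A :=
  ((F.sort (· ≤ ·)).map (Qproj A T)).prod

/-- The projection `e_{γ,F} = T_γ (∏_{j ∈ F} Q_j) T_γ*`. -/
def eProj (A : ℕ → ℕ → Bool) (T : ℕ → HilbSA A →L[ℂ] HilbSA A)
    {n : ℕ} (γ : Fin n → ℕ) (F : Finset ℕ) : HilbSA A →L[ℂ] HilbSA A :=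
  Tword A T γ * Qprod A T F * ContinuousLinearMap.adjoint (Tword A T γ)

attribute [local instance] Classical.propDecidable

open ContinuousLinearMap in
lemma clm_ext_delta {A : ℕ → ℕ → Bool} {E : Type*} [NormedAddCommGroup E]
    [NormedSpace ℂ E] (f g : HilbSA A →L[ℂ] E)
    (h : ∀ ω, f (deltaVec A ω) = g (deltaVec A ω)) : f = g := by
  ext x
  have hs := lp.hasSum_single (E := fun _ : SigmaA A => ℂ) (p := 2) (by norm_num) x
  have key : ∀ ω : SigmaA A, lp.single 2 ω (x ω) = (x ω) • deltaVec A ω := by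
    intro ω
    rw [deltaVec, ← lp.single_smul]
    norm_num
  have h1 : HasSum (fun ω : SigmaA A => f (lp.single 2 ω (x ω))) (f x) := hs.mapL f
  have h2 : HasSum (fun ω : SigmaA A => f (lp.single 2 ω (x ω))) (g x) := by
    have := hs.mapL g
    refine this.congr_fun fun ω => ?_
    rw [key, map_smul, map_smul, h]
  exact h1.unique h2

lemma vec_ext_delta {A : ℕ → ℕ → Bool} (x y : HilbSA A)
    (h : ∀ η, inner ℂ x (deltaVec A η) = (inner ℂ y (deltaVec A η) : ℂ)) : x = y := by
  refine ext_inner_right ℂ fun v => ?_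
  have : innerSL ℂ x = innerSL ℂ y := clm_ext_delta _ _ (by simpa using h)
  exact congrFun (congrArg DFunLike.coe this) v

lemma inner_delta_delta {A : ℕ → ℕ → Bool} (ω η : SigmaA A) :
    (inner ℂ (deltaVec A ω) (deltaVec A η) : ℂ) = if ω = η then 1 else 0 := by
  rw [deltaVec, deltaVec, lp.inner_single_left]
  by_cases h : ω = η
  · subst h; simp [lp.single_apply_self]
  · rw [lp.single_apply_ne (E := fun _ : SigmaA A => ℂ) 2 η _ h]; simp [h]


def shiftSeq (A : ℕ → ℕ → Bool) (ω : SigmaA A) : SigmaA A :=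
  ⟨fun n => ω.1 (n + 1), fun i => ω.2 (i + 1)⟩

def shiftn (A : ℕ → ℕ → Bool) (n : ℕ) (ω : SigmaA A) : SigmaA A :=
  ⟨fun i => ω.1 (n + i), fun i => ω.2 (n + i)⟩

lemma shift_cons (A : ℕ → ℕ → Bool) (s : ℕ) (ω : SigmaA A) (h : A s (ω.1 0) = true) :
    shiftSeq A (consSeq A s ω h) = ω := Subtype.ext rfl

lemma cons_eq_iff (A : ℕ → ℕ → Bool) (s : ℕ) (ω η : SigmaA A) (h : A s (η.1 0) = true)
    (h0 : ω.1 0 = s) : ω = consSeq A s η h ↔ shiftSeq A ω = η := by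
  constructor
  · rintro rfl; exact Subtype.ext rfl
  · rintro rfl
    refine Subtype.ext (funext fun k => ?_)
    cases k with
    | zero => exact h0
    | succ i => rfl



lemma shiftn_zero {A : ℕ → ℕ → Bool} (ω : SigmaA A) : shiftn A 0 ω = ω :=
  Subtype.ext (funext fun i => congrArg ω.1 (Nat.zero_add i))

lemma shiftn_shift {A : ℕ → ℕ → Bool} (n : ℕ) (ω : SigmaA A) :
    shiftn A n (shiftSeq A ω) = shiftn A (n + 1) ω :=
  Subtype.ext (funext fun i => congrArg ω.1 (by omega))

section Ops

variable {A : ℕ → ℕ → Bool} {T : ℕ → HilbSA A →L[ℂ] HilbSA A}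
  (hT : ∀ (s : ℕ) (ω : SigmaA A),
      T s (deltaVec A ω) =
        if h : A s (ω.1 0) = true then deltaVec A (consSeq A s ω h) else 0)

include hT

lemma Tadj_delta (s : ℕ) (ω : SigmaA A) :
    ContinuousLinearMap.adjoint (T s) (deltaVec A ω) =
      if ω.1 0 = s then deltaVec A (shiftSeq A ω) else 0 := by
  refine vec_ext_delta _ _ fun η => ?_
  rw [ContinuousLinearMap.adjoint_inner_left, hT]
  by_cases hA : A s (η.1 0) = true
  · rw [dif_pos hA, inner_delta_delta]
    by_cases h0 : ω.1 0 = s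
    · rw [if_pos h0, inner_delta_delta]
      exact if_congr (cons_eq_iff A s ω η hA h0) rfl rfl
    · rw [if_neg h0, if_neg, inner_zero_left]
      intro hc
      exact h0 (by rw [hc]; rfl)
  · rw [dif_neg hA, inner_zero_right]
    by_cases h0 : ω.1 0 = s
    · rw [if_pos h0, inner_delta_delta, if_neg]
      rintro rfl
      exact hA (h0 ▸ ω.2 0)
    · rw [if_neg h0, inner_zero_left]

lemma Qproj_delta (s : ℕ) (ω : SigmaA A) :
    Qproj A T s (deltaVec A ω) =
      if A s (ω.1 0) = true then deltaVec A ω else 0 := by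
  rw [Qproj, ContinuousLinearMap.mul_apply, hT]
  by_cases hA : A s (ω.1 0) = true
  · rw [dif_pos hA, if_pos hA, Tadj_delta hT,
      if_pos (show (consSeq A s ω hA).1 0 = s from rfl), shift_cons]
  · rw [dif_neg hA, if_neg hA, map_zero]

lemma Qlist_delta (l : List ℕ) (ω : SigmaA A) :
    ((l.map (Qproj A T)).prod) (deltaVec A ω) =
      if (∀ j ∈ l, A j (ω.1 0) = true) then deltaVec A ω else 0 := by
  induction l with
  | nil => simp
  | cons a l ih =>
    rw [List.map_cons, List.prod_cons, ContinuousLinearMap.mul_apply, ih]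
    by_cases h : ∀ j ∈ l, A j (ω.1 0) = true
    · rw [if_pos h, Qproj_delta hT]
      by_cases ha : A a (ω.1 0) = true
      · rw [if_pos ha, if_pos (by simpa [ha] using h)]
      · rw [if_neg ha, if_neg (by intro hc; exact ha (hc a (by simp)))]
    · rw [if_neg h, map_zero, if_neg (by intro hc; exact h fun j hj => hc j (by simp [hj]))]

lemma Qprod_delta (F : Finset ℕ) (ω : SigmaA A) :
    Qprod A T F (deltaVec A ω) =
      if (∀ j ∈ F, A j (ω.1 0) = true) then deltaVec A ω else 0 := by
  rw [Qprod, Qlist_delta hT]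
  congr 1
  simp [Finset.mem_sort]

lemma Tword_adj_delta {n : ℕ} (β : Fin n → ℕ) (ω : SigmaA A) :
    ContinuousLinearMap.adjoint (Tword A T β) (deltaVec A ω) =
      if (∀ k : Fin n, ω.1 k.1 = β k) then deltaVec A (shiftn A n ω) else 0 := by
  induction n generalizing ω with
  | zero =>
    rw [Tword, List.ofFn_zero, List.prod_nil, if_pos (fun k => k.elim0), shiftn_zero,
      ContinuousLinearMap.one_def, ContinuousLinearMap.adjoint_id]
    rfl
  | succ n ih =>
    have hdec : Tword A T β = T (β 0) * Tword A T (fun k : Fin n => β k.succ) := by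
      rw [Tword, Tword, List.ofFn_succ, List.prod_cons]
    rw [hdec, ContinuousLinearMap.mul_def, ContinuousLinearMap.adjoint_comp,
      ContinuousLinearMap.coe_comp', Function.comp_apply, Tadj_delta hT]
    by_cases h0 : ω.1 0 = β 0
    · rw [if_pos h0, ih (fun k : Fin n => β k.succ) (shiftSeq A ω),
        shiftn_shift]
      by_cases ht : ∀ k : Fin n, (shiftSeq A ω).1 k.1 = β k.succ
      · rw [if_pos ht, if_pos]
        intro k
        rcases k with ⟨kv, hk⟩
        cases kv with
        | zero => exact h0
        | succ i =>
          have := ht ⟨i, by omega⟩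
          exact this
      · rw [if_neg ht, if_neg]
        intro hc
        exact ht fun k => hc k.succ
    · rw [if_neg h0, map_zero, if_neg]
      intro hc
      exact h0 (hc 0)

lemma Tword_delta_shiftn {n : ℕ} (β : Fin n → ℕ) (ω : SigmaA A)
    (h : ∀ k : Fin n, ω.1 k.1 = β k) :
      Tword A T β (deltaVec A (shiftn A n ω)) = deltaVec A ω := by
  induction n generalizing ω with
  | zero =>
    rw [Tword, List.ofFn_zero, List.prod_nil, shiftn_zero]
    rfl
  | succ n ih =>
    have hdec : Tword A T β = T (β 0) * Tword A T (fun k : Fin n => β k.succ) := by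
      rw [Tword, Tword, List.ofFn_succ, List.prod_cons]
    have htail : ∀ k : Fin n, (shiftSeq A ω).1 k.1 = β k.succ := fun k => h k.succ
    rw [hdec, ContinuousLinearMap.mul_apply, ← shiftn_shift,
      ih (fun k : Fin n => β k.succ) (shiftSeq A ω) htail, hT]
    have hA : A (β 0) ((shiftSeq A ω).1 0) = true := by
      have h0 : ω.1 0 = β 0 := h 0
      have := ω.2 0
      rwa [h0] at this
    rw [dif_pos hA]
    congr 1
    refine Subtype.ext (funext fun k => ?_).symm
    cases k with
    | zero => exact h 0
    | succ i => rfl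

lemma eProj_delta {n : ℕ} (β : Fin n → ℕ) (F : Finset ℕ) (ω : SigmaA A) :
    eProj A T β F (deltaVec A ω) =
      if ((∀ k : Fin n, ω.1 k.1 = β k) ∧ ∀ j ∈ F, A j (ω.1 n) = true)
        then deltaVec A ω else 0 := by
  rw [eProj, ContinuousLinearMap.mul_apply, ContinuousLinearMap.mul_apply,
    Tword_adj_delta hT]
  by_cases hs : ∀ k : Fin n, ω.1 k.1 = β k
  · rw [if_pos hs, Qprod_delta hT]
    have hcoord : (shiftn A n ω).1 0 = ω.1 n := congrArg ω.1 rfl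
    by_cases hF : ∀ j ∈ F, A j (ω.1 n) = true
    · rw [if_pos (by simpa [hcoord] using hF), Tword_delta_shiftn hT β ω hs,
        if_pos ⟨hs, hF⟩]
    · rw [if_neg (by simpa [hcoord] using hF), map_zero, if_neg (by tauto)]
  · rw [if_neg hs, map_zero, map_zero, if_neg (by tauto)]

end Ops

def PredBF (A : ℕ → ℕ → Bool) {n : ℕ} (β : Fin n → ℕ) (F : Finset ℕ)
    (ω : SigmaA A) : Prop :=
  (∀ k : Fin n, ω.1 k.1 = β k) ∧ ∀ j ∈ F, A j (ω.1 n) = true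

section Ops2

variable {A : ℕ → ℕ → Bool} {T : ℕ → HilbSA A →L[ℂ] HilbSA A}
  (hT : ∀ (s : ℕ) (ω : SigmaA A),
      T s (deltaVec A ω) =
        if h : A s (ω.1 0) = true then deltaVec A (consSeq A s ω h) else 0)

include hT

lemma eProj_delta' {n : ℕ} (β : Fin n → ℕ) (F : Finset ℕ) (ω : SigmaA A) :
    eProj A T β F (deltaVec A ω) = if PredBF A β F ω then deltaVec A ω else 0 := by
  rw [eProj_delta hT β F ω]
  exact if_congr Iff.rfl rfl rfl

lemma eProj_mul_delta {n m : ℕ} (β : Fin n → ℕ) (γ : Fin m → ℕ) (F G : Finset ℕ)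
    (ω : SigmaA A) :
    (eProj A T β F * eProj A T γ G) (deltaVec A ω) =
      if PredBF A β F ω ∧ PredBF A γ G ω then deltaVec A ω else 0 := by
  rw [ContinuousLinearMap.mul_apply, eProj_delta' hT]
  by_cases h : PredBF A γ G ω
  · rw [if_pos h, eProj_delta' hT]
    by_cases h2 : PredBF A β F ω
    · rw [if_pos h2, if_pos ⟨h2, h⟩]
    · rw [if_neg h2, if_neg (by tauto)]
  · rw [if_neg h, map_zero, if_neg (by tauto)]

lemma mul_eq_eProj {n m n' : ℕ} (β : Fin n → ℕ) (γ : Fin m → ℕ) (β' : Fin n' → ℕ)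
    (F G F' : Finset ℕ)
    (h : ∀ ω : SigmaA A, (PredBF A β F ω ∧ PredBF A γ G ω) ↔ PredBF A β' F' ω) :
    eProj A T β F * eProj A T γ G = eProj A T β' F' := by
  refine clm_ext_delta _ _ fun ω => ?_
  rw [eProj_mul_delta hT, eProj_delta' hT]
  exact if_congr (h ω) rfl rfl

lemma mul_eq_zero' {n m : ℕ} (β : Fin n → ℕ) (γ : Fin m → ℕ) (F G : Finset ℕ)
    (h : ∀ ω : SigmaA A, ¬(PredBF A β F ω ∧ PredBF A γ G ω)) :
    eProj A T β F * eProj A T γ G = 0 := by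
  refine clm_ext_delta _ _ fun ω => ?_
  rw [eProj_mul_delta hT, if_neg (h ω)]
  rfl

end Ops2


/-- Products of the projections `e_{β,F}` when `γ` is a prefix of `β`:
`e_{β,F} e_{γ,G} = e_{β,F∪G}` if `β = γ`; `e_{β,F} e_{γ,G} = e_{β,F}` if
`β ≠ γ` and `A(k, β_{|γ|}) = 1` for all `k ∈ G`; and `0` otherwise.
Consequently the linear span of the projections `e_{β,F}` is closed under
multiplication. -/
theorem eProj_mul_eProj (A : ℕ → ℕ → Bool)
    (T : ℕ → HilbSA A →L[ℂ] HilbSA A)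
    (hT : ∀ (s : ℕ) (ω : SigmaA A),
      T s (deltaVec A ω) =
        if h : A s (ω.1 0) = true then deltaVec A (consSeq A s ω h) else 0) :
    (∀ (n m : ℕ) (β : Fin n → ℕ) (γ : Fin m → ℕ) (F G : Finset ℕ),
      AdmissibleWord A β → AdmissibleWord A γ →
      (n ≠ 0 ∨ F ≠ ∅) → (m ≠ 0 ∨ G ≠ ∅) →
      ∀ hm : m ≤ n, (∀ k : Fin m, γ k = β (Fin.castLE hm k)) →
        ((n = m → eProj A T β F * eProj A T γ G = eProj A T β (F ∪ G)) ∧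
         (∀ h : m < n, (∀ k ∈ G, A k (β ⟨m, h⟩) = true) →
            eProj A T β F * eProj A T γ G = eProj A T β F) ∧
         (∀ h : m < n, ¬ (∀ k ∈ G, A k (β ⟨m, h⟩) = true) →
            eProj A T β F * eProj A T γ G = 0))) ∧
    (∀ x ∈ Submodule.span ℂ
        {u : HilbSA A →L[ℂ] HilbSA A | ∃ (n : ℕ) (β : Fin n → ℕ) (F : Finset ℕ),
          AdmissibleWord A β ∧ (n ≠ 0 ∨ F ≠ ∅) ∧ u = eProj A T β F},
      ∀ y ∈ Submodule.span ℂ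
        {u : HilbSA A →L[ℂ] HilbSA A | ∃ (n : ℕ) (β : Fin n → ℕ) (F : Finset ℕ),
          AdmissibleWord A β ∧ (n ≠ 0 ∨ F ≠ ∅) ∧ u = eProj A T β F},
      x * y ∈ Submodule.span ℂ
        {u : HilbSA A →L[ℂ] HilbSA A | ∃ (n : ℕ) (β : Fin n → ℕ) (F : Finset ℕ),
          AdmissibleWord A β ∧ (n ≠ 0 ∨ F ≠ ∅) ∧ u = eProj A T β F}) := by
  have h1 : (∀ (n m : ℕ) (β : Fin n → ℕ) (γ : Fin m → ℕ) (F G : Finset ℕ),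
      AdmissibleWord A β → AdmissibleWord A γ →
      (n ≠ 0 ∨ F ≠ ∅) → (m ≠ 0 ∨ G ≠ ∅) →
      ∀ hm : m ≤ n, (∀ k : Fin m, γ k = β (Fin.castLE hm k)) →
        ((n = m → eProj A T β F * eProj A T γ G = eProj A T β (F ∪ G)) ∧
         (∀ h : m < n, (∀ k ∈ G, A k (β ⟨m, h⟩) = true) →
            eProj A T β F * eProj A T γ G = eProj A T β F) ∧
         (∀ h : m < n, ¬ (∀ k ∈ G, A k (β ⟨m, h⟩) = true) →
            eProj A T β F * eProj A T γ G = 0))) := by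
    intro n m β γ F G _ _ _ _ hm hpre
    have hsw : ∀ ω : SigmaA A, (∀ k : Fin n, ω.1 k.1 = β k) →
        ∀ k : Fin m, ω.1 k.1 = γ k := by
      intro ω hβ k
      rw [hpre k]
      exact hβ (Fin.castLE hm k)
    refine ⟨?_, ?_, ?_⟩
    · intro hnm
      subst hnm
      refine mul_eq_eProj hT β γ β F G (F ∪ G) fun ω => ?_
      constructor
      · rintro ⟨⟨hb, hF⟩, ⟨hg, hG⟩⟩
        refine ⟨hb, fun j hj => ?_⟩
        rcases Finset.mem_union.1 hj with h | h
        · exact hF j h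
        · exact hG j h
      · rintro ⟨hb, hFG⟩
        exact ⟨⟨hb, fun j hj => hFG j (Finset.mem_union_left _ hj)⟩,
          ⟨hsw ω hb, fun j hj => hFG j (Finset.mem_union_right _ hj)⟩⟩
    · intro h hG
      refine mul_eq_eProj hT β γ β F G F fun ω => ?_
      constructor
      · rintro ⟨hP, _⟩
        exact hP
      · rintro ⟨hb, hF⟩
        refine ⟨⟨hb, hF⟩, ⟨hsw ω hb, fun k hk => ?_⟩⟩
        have hx : ω.1 m = β ⟨m, h⟩ := hb ⟨m, h⟩
        rw [hx]
        exact hG k hk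
    · intro h hG
      refine mul_eq_zero' hT β γ F G fun ω => ?_
      rintro ⟨⟨hb, _⟩, ⟨_, hGc⟩⟩
      refine hG fun k hk => ?_
      have hx : ω.1 m = β ⟨m, h⟩ := hb ⟨m, h⟩
      rw [← hx]
      exact hGc k hk
  refine ⟨h1, ?_⟩
  have key : ∀ (n : ℕ) (β : Fin n → ℕ) (F : Finset ℕ), AdmissibleWord A β →
      (n ≠ 0 ∨ F ≠ ∅) →
      ∀ (m : ℕ) (γ : Fin m → ℕ) (G : Finset ℕ), AdmissibleWord A γ →
      (m ≠ 0 ∨ G ≠ ∅) →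
      eProj A T β F * eProj A T γ G ∈ Submodule.span ℂ
        {u : HilbSA A →L[ℂ] HilbSA A | ∃ (n : ℕ) (β : Fin n → ℕ) (F : Finset ℕ),
          AdmissibleWord A β ∧ (n ≠ 0 ∨ F ≠ ∅) ∧ u = eProj A T β F} := by
    intro n β F admβ hc m γ G admγ hc'
    rcases le_or_gt m n with hm | hm
    · by_cases hpre : ∀ k : Fin m, γ k = β (Fin.castLE hm k)
      · obtain ⟨ha, hb, hcz⟩ := h1 n m β γ F G admβ admγ hc hc' hm hpre
        rcases eq_or_lt_of_le hm with heq | hlt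
        · rw [ha heq.symm]
          refine Submodule.subset_span ⟨n, β, F ∪ G, admβ, ?_, rfl⟩
          rcases hc with h | h
          · exact Or.inl h
          · exact Or.inr fun hc2 => h (Finset.union_eq_empty.mp hc2).1
        · by_cases hG : ∀ k ∈ G, A k (β ⟨m, hlt⟩) = true
          · rw [hb hlt hG]
            exact Submodule.subset_span ⟨n, β, F, admβ, hc, rfl⟩
          · rw [hcz hlt hG]
            exact Submodule.zero_mem _
      · have hz : eProj A T β F * eProj A T γ G = 0 := by
          refine mul_eq_zero' hT β γ F G ?_
          rintro ω ⟨⟨hb, _⟩, ⟨hg, _⟩⟩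
          refine hpre fun k => ?_
          rw [← hg k]
          exact hb (Fin.castLE hm k)
        rw [hz]
        exact Submodule.zero_mem _
    · have hnm : n ≤ m := hm.le
      by_cases hpre : ∀ k : Fin n, β k = γ (Fin.castLE hnm k)
      · have hswn : ∀ ω : SigmaA A, (∀ k : Fin m, ω.1 k.1 = γ k) →
            ∀ k : Fin n, ω.1 k.1 = β k := by
          intro ω hg k
          rw [hpre k]
          exact hg (Fin.castLE hnm k)
        by_cases hF : ∀ j ∈ F, A j (γ ⟨n, hm⟩) = true
        · have heq : eProj A T β F * eProj A T γ G = eProj A T γ G := by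
            refine mul_eq_eProj hT β γ γ F G G fun ω => ?_
            constructor
            · rintro ⟨_, hQ⟩
              exact hQ
            · rintro ⟨hg, hGc⟩
              refine ⟨⟨hswn ω hg, fun j hj => ?_⟩, ⟨hg, hGc⟩⟩
              have hx : ω.1 n = γ ⟨n, hm⟩ := hg ⟨n, hm⟩
              rw [hx]
              exact hF j hj
          rw [heq]
          exact Submodule.subset_span ⟨m, γ, G, admγ, hc', rfl⟩
        · have hz : eProj A T β F * eProj A T γ G = 0 := by
            refine mul_eq_zero' hT β γ F G ?_
            rintro ω ⟨⟨_, hFc⟩, ⟨hg, _⟩⟩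
            refine hF fun j hj => ?_
            have hx : ω.1 n = γ ⟨n, hm⟩ := hg ⟨n, hm⟩
            rw [← hx]
            exact hFc j hj
          rw [hz]
          exact Submodule.zero_mem _
      · have hz : eProj A T β F * eProj A T γ G = 0 := by
          refine mul_eq_zero' hT β γ F G ?_
          rintro ω ⟨⟨hb, _⟩, ⟨hg, _⟩⟩
          refine hpre fun k => ?_
          rw [← hb k]
          exact hg (Fin.castLE hnm k)
        rw [hz]
        exact Submodule.zero_mem _
  intro x hx y hy
  refine Submodule.span_induction ?_ ?_ ?_ ?_ hx
  · intro u hu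
    refine Submodule.span_induction ?_ ?_ ?_ ?_ hy
    · rintro v ⟨m, γ, G, admγ, hc', rfl⟩
      obtain ⟨n, β, F, admβ, hc, rfl⟩ := hu
      exact key n β F admβ hc m γ G admγ hc'
    · rw [mul_zero]
      exact Submodule.zero_mem _
    · intro a b _ _ pa pb
      rw [mul_add]
      exact Submodule.add_mem _ pa pb
    · intro c a _ pa
      rw [mul_smul_comm]
      exact Submodule.smul_mem _ _ pa
  · rw [zero_mul]
    exact Submodule.zero_mem _
  · intro a b _ _ pa pb
    rw [add_mul]
    exact Submodule.add_mem _ pa pb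
  · intro c a _ pa
    rw [smul_mul_assoc]
    exact Submodule.smul_mem _ _ pa
end
end

section
/- Suppose A is a transition matrix over ℕ such that the full space X_A is compact. Then a sequence (ξⁿ) in X_A \ E_A has all of its limit points in the set E_A of empty-stem configurations if and only if the first symbol of the stem of ξⁿ tends to infinity, i.e. κ(ξⁿ)₀ → ∞. -/
/-- If the generalized Markov shift `X_A` (modeled as a compact set of
configurations on the Cayley tree of the free group on ℕ) is compact, then a
sequence in `X_A \ E_A` has all of its limit points in the set `E_A` of
empty-stem configurations if and only if the first symbol of the stem tends to
infinity (no bounded generator is eventually filled). -/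
theorem limit_points_in_empty_stems_iff
    (A : ℕ → ℕ → Bool)
    (X : Set (FreeGroup ℕ → Bool)) (hX : IsCompact X)
    (ξ : ℕ → FreeGroup ℕ → Bool)
    (hmem : ∀ n, ξ n ∈ X)
    (hnotE : ∀ n, ∃ s : ℕ, ξ n (FreeGroup.of s) = true) :
    (∀ R : FreeGroup ℕ → Bool,
        (∃ φ : ℕ → ℕ, StrictMono φ ∧
          Filter.Tendsto (fun k => ξ (φ k)) Filter.atTop (nhds R)) →
        (R ∈ X ∧ ∀ s : ℕ, R (FreeGroup.of s) = false))
      ↔ (∀ N : ℕ, ∀ᶠ n in Filter.atTop,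
          ∀ s ≤ N, ξ n (FreeGroup.of s) = false) := by
  haveI : Countable (FreeGroup ℕ) :=
    Function.Surjective.countable (fun x => Quot.exists_rep x : Function.Surjective FreeGroup.mk)
  constructor
  · intro h N
    by_contra hc
    rw [Filter.not_eventually] at hc
    obtain ⟨φ₁, hφ₁, hp⟩ := Filter.extraction_of_frequently_atTop hc
    obtain ⟨R, hRX, φ₂, hφ₂, hlim⟩ := hX.tendsto_subseq (fun k => hmem (φ₁ k))
    obtain ⟨-, hR2⟩ := h R ⟨φ₁ ∘ φ₂, hφ₁.comp hφ₂, hlim⟩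
    have hev : ∀ᶠ k in Filter.atTop,
        ∀ s ∈ Set.Iic N, ξ (φ₁ (φ₂ k)) (FreeGroup.of s) = false := by
      rw [Filter.eventually_all_finite (Set.finite_Iic N)]
      intro s _
      have h1 := (tendsto_pi_nhds.mp hlim) (FreeGroup.of s)
      have h2 : ∀ᶠ k in Filter.atTop,
          (fun k => ξ (φ₁ (φ₂ k)) (FreeGroup.of s)) k ∈ ({false} : Set Bool) :=
        h1 (IsOpen.mem_nhds (isOpen_discrete _) (by simp [hR2 s]))
      exact h2.mono (fun k hk => hk)
    obtain ⟨k, hk⟩ := hev.exists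
    exact hp (φ₂ k) (fun s hs => hk s hs)
  · rintro h R ⟨φ, hφ, hlim⟩
    refine ⟨hX.isClosed.mem_of_tendsto hlim
      (Filter.Eventually.of_forall fun k => hmem (φ k)), fun s => ?_⟩
    have h1 := (tendsto_pi_nhds.mp hlim) (FreeGroup.of s)
    have h2 : ∀ᶠ k in Filter.atTop, ξ (φ k) (FreeGroup.of s) = false :=
      hφ.tendsto_atTop.eventually ((h s).mono (fun n hn => hn s le_rfl))
    have h3 : Filter.Tendsto (fun k => ξ (φ k) (FreeGroup.of s))
        Filter.atTop (nhds false) := tendsto_nhds_of_eventually_eq h2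
    exact tendsto_nhds_unique h1 h3
end

section
/- Suppose A is irreducible and column-finite (each column has finitely many 1's), X_A is compact, and the shift map σ extends continuously to all of X_A. Then the set E_A of empty-word configurations is forward invariant: σ(E_A) ⊆ E_A. -/
/-- The positive word `x₀x₁⋯x_{n-1}` in the free group on ℕ determined by the
first `n` entries of a sequence `x`. -/
def wordOf (x : ℕ → ℕ) (n : ℕ) : FreeGroup ℕ :=
  (List.ofFn fun k : Fin n => FreeGroup.of (x k)).prod


lemma wordOf_one (x : ℕ → ℕ) : wordOf x 1 = FreeGroup.of (x 0) := by
  simp [wordOf]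

lemma wordOf_two (x : ℕ → ℕ) :
    wordOf x 2 = FreeGroup.of (x 0) * FreeGroup.of (x 1) := by
  simp [wordOf, List.ofFn_succ]

/-- If `A` is irreducible and column-finite, `X_A` is compact and the shift map
extends continuously to all of `X_A`, then the set `E_A` of empty-word
configurations is forward invariant: `σ(E_A) ⊆ E_A`. -/
theorem empty_words_forward_invariant
    (A : ℕ → ℕ → Bool)
    -- A irreducible
    (hirr : ∀ i j, 1 ≤ i → 1 ≤ j →
      ∃ (n : ℕ) (w : Fin (n + 1) → ℕ), w 0 = i ∧ w (Fin.last n) = j ∧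
        ∀ k : Fin n, A (w k.castSucc) (w k.succ) = true)
    -- A column-finite
    (hcf : ∀ j, {i | A i j = true}.Finite)
    (X : Set (FreeGroup ℕ → Bool)) (hX : IsCompact X)
    -- at most one filled generator (rule R3 at the root)
    (h1 : ∀ ξ ∈ X, ∀ s t : ℕ, ξ (FreeGroup.of s) = true →
        ξ (FreeGroup.of t) = true → s = t)
    -- at most one filled continuation at the second level
    (h2 : ∀ ξ ∈ X, ∀ s t t' : ℕ,
        ξ (FreeGroup.of s * FreeGroup.of t) = true →
        ξ (FreeGroup.of s * FreeGroup.of t') = true → t = t')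
    -- filled positive words are admissible and connected (rules R2, R4)
    (h3 : ∀ ξ ∈ X, ∀ s t : ℕ,
        ξ (FreeGroup.of s * FreeGroup.of t) = true →
        ξ (FreeGroup.of s) = true ∧ A s t = true)
    -- the infinite-stem configurations Σ_A are dense in X_A
    (hdense : X ⊆ closure {η | η ∈ X ∧ ∃ x : ℕ → ℕ,
        (∀ i, A (x i) (x (i + 1)) = true) ∧ ∀ n, η (wordOf x n) = true})
    (sigma : (FreeGroup ℕ → Bool) → (FreeGroup ℕ → Bool))
    -- σ is the shift on configurations with nonempty stem
    (hsig : ∀ ξ ∈ X, ∀ s : ℕ, ξ (FreeGroup.of s) = true →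
        ∀ g, sigma ξ g = ξ (FreeGroup.of s * g))
    -- σ extends continuously to all of X_A
    (hcont : ContinuousOn sigma X) (hmaps : Set.MapsTo sigma X X) :
    Set.MapsTo sigma
      {ξ | ξ ∈ X ∧ ∀ s : ℕ, ξ (FreeGroup.of s) = false}
      {ξ | ξ ∈ X ∧ ∀ s : ℕ, ξ (FreeGroup.of s) = false} := by
  intro ξ hξ
  obtain ⟨hξX, hξE⟩ := hξ
  refine ⟨hmaps hξX, fun s₀ => ?_⟩
  by_contra hne
  have hs₀ : sigma ξ (FreeGroup.of s₀) = true := by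
    cases h : sigma ξ (FreeGroup.of s₀) <;> simp_all
  -- open neighborhoods
  set D : Set (FreeGroup ℕ → Bool) := {η | η ∈ X ∧ ∃ x : ℕ → ℕ,
      (∀ i, A (x i) (x (i + 1)) = true) ∧ ∀ n, η (wordOf x n) = true} with hD
  have hDX : D ⊆ X := fun η hη => hη.1
  set U : Set (FreeGroup ℕ → Bool) :=
    ⋂ i ∈ {i | A i s₀ = true}, {η | η (FreeGroup.of i) = false} with hU
  have hUopen : IsOpen U := by
    refine (hcf s₀).isOpen_biInter (fun i _ => ?_)
    have he : {η : FreeGroup ℕ → Bool | η (FreeGroup.of i) = false} =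
        (fun η : FreeGroup ℕ → Bool => η (FreeGroup.of i)) ⁻¹' {false} := rfl
    rw [he]
    exact (isOpen_discrete _).preimage (continuous_apply _)
  have hξU : ξ ∈ U := by
    simp only [hU, Set.mem_iInter]
    intro i _
    exact hξE i
  set V : Set (FreeGroup ℕ → Bool) := {ζ | ζ (FreeGroup.of s₀) = true} with hV
  have hVopen : IsOpen V := by
    have he : V = (fun η : FreeGroup ℕ → Bool => η (FreeGroup.of s₀)) ⁻¹' {true} := rfl
    rw [he]
    exact (isOpen_discrete _).preimage (continuous_apply _)
  have hVmem : V ∈ nhds (sigma ξ) := hVopen.mem_nhds hs₀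
  have hpre : sigma ⁻¹' V ∈ nhdsWithin ξ X := hcont ξ hξX hVmem
  have hclos : ξ ∈ closure D := hdense hξX
  have hnebot : (nhdsWithin ξ D).NeBot := mem_closure_iff_nhdsWithin_neBot.mp hclos
  have hpre' : sigma ⁻¹' V ∈ nhdsWithin ξ D :=
    nhdsWithin_mono ξ hDX hpre
  have hU' : U ∈ nhdsWithin ξ D :=
    mem_nhdsWithin_of_mem_nhds (hUopen.mem_nhds hξU)
  have hDmem : D ∈ nhdsWithin ξ D := self_mem_nhdsWithin
  obtain ⟨η, ⟨hηV, hηU⟩, hηX, x, hadm, hstem⟩ :=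
    Filter.nonempty_of_mem (Filter.inter_mem (Filter.inter_mem hpre' hU') hDmem)
  have h1' : η (FreeGroup.of (x 0)) = true := by
    have := hstem 1; rwa [wordOf_one] at this
  have h2' : η (FreeGroup.of (x 0) * FreeGroup.of (x 1)) = true := by
    have := hstem 2; rwa [wordOf_two] at this
  have hshift : sigma η (FreeGroup.of s₀) = η (FreeGroup.of (x 0) * FreeGroup.of s₀) :=
    hsig η hηX (x 0) h1' _
  have hηs : η (FreeGroup.of (x 0) * FreeGroup.of s₀) = true := by
    rw [← hshift]; exact hηV
  have hA : A (x 0) s₀ = true := (h3 η hηX (x 0) s₀ hηs).2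
  have : η (FreeGroup.of (x 0)) = false := by
    have := Set.mem_iInter.mp hηU
    exact Set.mem_iInter.mp (this (x 0)) hA
  simp_all
end

section
/- Let X_A belong to the single empty-word class: A irreducible and column-finite, X_A compact, and E_A = {ξ⁰} a singleton. Then the extension of the shift map σ to X_A defined by σ(ξ⁰) = ξ⁰ is continuous on X_A. -/
/-- Single empty-word class: if `A` is irreducible and column-finite, `X_A` is
compact and the set of empty-stem configurations is a singleton `{ξ⁰}`, then
the extension of the shift map to `X_A` defined by `σ(ξ⁰) = ξ⁰` is
continuous on `X_A`. -/
theorem single_empty_word_shift_continuous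
    (A : ℕ → ℕ → Bool)
    -- A irreducible
    (hirr : ∀ i j, 1 ≤ i → 1 ≤ j →
      ∃ (n : ℕ) (w : Fin (n + 1) → ℕ), w 0 = i ∧ w (Fin.last n) = j ∧
        ∀ k : Fin n, A (w k.castSucc) (w k.succ) = true)
    -- A column-finite
    (hcf : ∀ j, {i | A i j = true}.Finite)
    (X : Set (FreeGroup ℕ → Bool)) (hX : IsCompact X)
    -- at most one filled generator and continuation (rule R3)
    (h1 : ∀ ξ ∈ X, ∀ s t : ℕ, ξ (FreeGroup.of s) = true →
        ξ (FreeGroup.of t) = true → s = t)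
    (h2 : ∀ ξ ∈ X, ∀ s t t' : ℕ,
        ξ (FreeGroup.of s * FreeGroup.of t) = true →
        ξ (FreeGroup.of s * FreeGroup.of t') = true → t = t')
    -- filled positive words are admissible and connected (rules R2, R4)
    (h3 : ∀ ξ ∈ X, ∀ s t : ℕ,
        ξ (FreeGroup.of s * FreeGroup.of t) = true →
        ξ (FreeGroup.of s) = true ∧ A s t = true)
    -- E_A is a singleton {ξ⁰}
    (ξ0 : FreeGroup ℕ → Bool)
    (hE : {ξ | ξ ∈ X ∧ ∀ s : ℕ, ξ (FreeGroup.of s) = false} = {ξ0})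
    (sigma : (FreeGroup ℕ → Bool) → (FreeGroup ℕ → Bool))
    -- σ is the shift on configurations with nonempty stem
    (hsig : ∀ ξ ∈ X, ∀ s : ℕ, ξ (FreeGroup.of s) = true →
        ∀ g, sigma ξ g = ξ (FreeGroup.of s * g))
    (hmaps : Set.MapsTo sigma X X)
    -- the extension fixes the empty word
    (hfix : sigma ξ0 = ξ0) :
    ContinuousOn sigma X := by

  classical
  have hξ0 : ξ0 ∈ X ∧ ∀ s : ℕ, ξ0 (FreeGroup.of s) = false := by
    have : ξ0 ∈ {ξ | ξ ∈ X ∧ ∀ s : ℕ, ξ (FreeGroup.of s) = false} := by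
      rw [hE]; rfl
    exact this
  -- coordinate cylinders are open
  have hopen : ∀ (g : FreeGroup ℕ) (b : Bool),
      IsOpen {ζ : FreeGroup ℕ → Bool | ζ g = b} := by
    intro g b
    have : {ζ : FreeGroup ℕ → Bool | ζ g = b}
        = (fun ζ : FreeGroup ℕ → Bool => ζ g) ⁻¹' {b} := rfl
    rw [this]
    exact (isOpen_discrete ({b} : Set Bool)).preimage (continuous_apply g)
  intro ξ hξ
  by_cases hstem : ∃ s : ℕ, ξ (FreeGroup.of s) = true
  · obtain ⟨s, hs⟩ := hstem
    have hf : ContinuousWithinAt (fun ζ : FreeGroup ℕ → Bool =>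
        fun g => ζ (FreeGroup.of s * g)) X ξ :=
      (continuous_pi fun g => continuous_apply (FreeGroup.of s * g)).continuousWithinAt
    apply hf.congr_of_eventuallyEq
    · have hO : {ζ : FreeGroup ℕ → Bool | ζ (FreeGroup.of s) = true} ∈ nhds ξ :=
        (hopen _ true).mem_nhds hs
      filter_upwards [nhdsWithin_le_nhds hO, self_mem_nhdsWithin] with ζ hζ1 hζ2
      exact funext fun g => hsig ζ hζ2 s hζ1 g
    · exact funext fun g => hsig ξ hξ s hs g
  · push_neg at hstem
    simp only [Bool.not_eq_true] at hstem
    have hξeq : ξ = ξ0 := by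
      have : ξ ∈ ({ξ0} : Set _) := by rw [← hE]; exact ⟨hξ, hstem⟩
      simpa using this
    rw [hξeq]
    show Filter.Tendsto sigma (nhdsWithin ξ0 X) (nhds (sigma ξ0))
    rw [hfix, Filter.tendsto_iff_ultrafilter]
    intro U hU
    have hXU : X ∈ U := hU self_mem_nhdsWithin
    have hmapX : (↑(U.map sigma) : Filter _) ≤ Filter.principal X := by
      rw [Filter.le_principal_iff, Ultrafilter.coe_map, Filter.mem_map]
      exact Filter.mem_of_superset hXU fun x hx => hmaps hx
    obtain ⟨η, hηX, hηU⟩ := hX.ultrafilter_le_nhds (U.map sigma) hmapX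
    have hηstem : ∀ t : ℕ, η (FreeGroup.of t) = false := by
      intro t
      by_contra hcon
      have hηt : η (FreeGroup.of t) = true := by
        cases h : η (FreeGroup.of t) with
        | false => exact absurd h hcon
        | true => rfl
      -- the set of configurations vanishing on the column of t
      set T : Finset ℕ := (hcf t).toFinset with hT
      set N : Set (FreeGroup ℕ → Bool) :=
        {ζ | ∀ i ∈ T, ζ (FreeGroup.of i) = false} with hN
      have hNopen : IsOpen N := by
        have : N = ⋂ i ∈ T, {ζ : FreeGroup ℕ → Bool | ζ (FreeGroup.of i) = false} := by
          ext ζ; simp [hN]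
        rw [this]
        exact isOpen_biInter_finset fun i _ => hopen _ false
      have hNmem : N ∈ nhds ξ0 := hNopen.mem_nhds fun i _ => hξ0.2 i
      have hNU : N ∈ U := hU (nhdsWithin_le_nhds hNmem)
      have hsub : N ∩ X ⊆ sigma ⁻¹' {ζ | ζ (FreeGroup.of t) = false} := by
        rintro ζ ⟨hζN, hζX⟩
        by_cases hst : ∃ s' : ℕ, ζ (FreeGroup.of s') = true
        · obtain ⟨s', hs'⟩ := hst
          have heq := hsig ζ hζX s' hs' (FreeGroup.of t)
          have hfalse : ζ (FreeGroup.of s' * FreeGroup.of t) = false := by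
            cases h : ζ (FreeGroup.of s' * FreeGroup.of t) with
            | false => rfl
            | true =>
              have hA := (h3 ζ hζX s' t h).2
              have : s' ∈ T := by rw [hT, Set.Finite.mem_toFinset]; exact hA
              rw [hζN s' this] at hs'
              exact absurd hs' (by simp)
          show sigma ζ (FreeGroup.of t) = false
          rw [heq, hfalse]
        · push_neg at hst
          simp only [Bool.not_eq_true] at hst
          have : ζ = ξ0 := by
            have : ζ ∈ ({ξ0} : Set _) := by rw [← hE]; exact ⟨hζX, hst⟩
            simpa using this
          show sigma ζ (FreeGroup.of t) = false
          rw [this, hfix]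
          exact hξ0.2 t
      have hfmem : {ζ : FreeGroup ℕ → Bool | ζ (FreeGroup.of t) = false} ∈ U.map sigma := by
        rw [Ultrafilter.mem_map]
        exact Filter.mem_of_superset (Filter.inter_mem hNU hXU) hsub
      have htmem : {ζ : FreeGroup ℕ → Bool | ζ (FreeGroup.of t) = true} ∈ U.map sigma :=
        hηU ((hopen _ true).mem_nhds hηt)
      obtain ⟨ζ, hζ1, hζ2⟩ := Filter.nonempty_of_mem (Filter.inter_mem htmem hfmem)
      rw [Set.mem_setOf_eq] at hζ1 hζ2
      rw [hζ1] at hζ2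
      exact absurd hζ2 (by simp)
    have hηeq : η = ξ0 := by
      have : η ∈ ({ξ0} : Set _) := by rw [← hE]; exact ⟨hηX, hηstem⟩
      simpa using this
    rw [hηeq] at hηU
    rwa [Ultrafilter.coe_map] at hηU
end

section
/- Let A be a column-finite irreducible transition matrix whose generalized shift X_A is compact and whose shift σ extends continuously to X_A with σ(Σ_A) ⊆ Σ_A and σ(E_A) ⊆ E_A, where X_A = Σ_A ⊔ F_A ⊔ E_A and every point of F_A eventually maps into E_A. Then every σ-invariant Borel probability measure ν on X_A gives full measure to Σ_A ∪ E_A, and can be written as ν = λμ + (1−λ)ν̃ with λ ∈ [0,1], μ a σ-invariant probability on Σ_A, and ν̃ a σ-invariant probability on E_A. -/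
open MeasureTheory

/-- For a compact generalized Markov shift `X_A = Σ_A ⊔ F_A ⊔ E_A` with a
continuous extended shift `σ`, every `σ`-invariant Borel probability measure
gives full measure to `Σ_A ∪ E_A` and decomposes as
`ν = λ·μ + (1−λ)·ν̃` with `μ` an invariant probability on `Σ_A` and `ν̃` an
invariant probability on `E_A`. -/
theorem invariant_measure_decomposition
    (X : Type*) [TopologicalSpace X] [CompactSpace X]
    [TopologicalSpace.MetrizableSpace X]
    [MeasurableSpace X] [BorelSpace X]
    (σ : X → X) (hσ : Continuous σ)
    (SA FA EA : Set X)
    (hmS : MeasurableSet SA) (hmF : MeasurableSet FA) (hmE : MeasurableSet EA)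
    (hcover : SA ∪ FA ∪ EA = Set.univ)
    (hSF : Disjoint SA FA) (hSE : Disjoint SA EA) (hFE : Disjoint FA EA)
    (hEfin : EA.Finite)
    (hSinv : σ ⁻¹' SA = SA)
    (hEmap : Set.MapsTo σ EA EA)
    (hFmap : ∀ x ∈ FA, ∃ n : ℕ, σ^[n] x ∈ EA)
    (ν : Measure X) (hprob : IsProbabilityMeasure ν)
    (hinv : ∀ B, MeasurableSet B → ν (σ ⁻¹' B) = ν B) :
    ν (SA ∪ EA) = 1 ∧
    ∃ (l : ENNReal) (μ ν' : Measure X), l ≤ 1 ∧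
      ν = l • μ + (1 - l) • ν' ∧
      (l ≠ 0 → IsProbabilityMeasure μ ∧
        (∀ B, MeasurableSet B → μ (σ ⁻¹' B) = μ B) ∧ μ SA = 1) ∧
      (l ≠ 1 → IsProbabilityMeasure ν' ∧
        (∀ B, MeasurableSet B → ν' (σ ⁻¹' B) = ν' B) ∧ ν' EA = 1) := by
  have hmeas : Measurable σ := hσ.measurable
  have hiterS : ∀ n, (σ^[n]) ⁻¹' SA = SA := by
    intro n
    induction n with
    | zero => simp
    | succ n ih =>
      rw [Function.iterate_succ, Set.preimage_comp, ih, hSinv]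
  -- the sets B n
  set B : ℕ → Set X := fun n => (σ^[n]) ⁻¹' EA with hB
  have hmB : ∀ n, MeasurableSet (B n) := fun n => (hmeas.iterate n) hmE
  have hBmono : Monotone B := by
    apply monotone_nat_of_le_succ
    intro n x hx
    simp only [hB, Set.mem_preimage] at hx ⊢
    rw [Function.iterate_succ_apply']
    exact hEmap hx
  have hBmeasure : ∀ n, ν (B n) = ν EA := by
    intro n
    induction n with
    | zero => simp [hB]
    | succ n ih =>
      have : B (n+1) = σ ⁻¹' (B n) := by
        ext x
        simp [hB, Function.iterate_succ_apply]
      rw [this, hinv _ (hmB n), ih]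
  have hcompl : SAᶜ = FA ∪ EA := by
    ext x
    constructor
    · intro hx
      have : x ∈ SA ∪ FA ∪ EA := hcover ▸ Set.mem_univ x
      rcases this with (h | h) | h
      · exact absurd h hx
      · exact Or.inl h
      · exact Or.inr h
    · rintro (h | h)
      · exact Set.disjoint_right.mp hSF h
      · exact Set.disjoint_right.mp hSE h
  have hUnion : (⋃ n, B n) = SAᶜ := by
    apply Set.Subset.antisymm
    · intro x hx
      rcases Set.mem_iUnion.mp hx with ⟨n, hn⟩
      intro hxS
      have : σ^[n] x ∈ SA := by rw [← hiterS n] at hxS; exact hxS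
      exact Set.disjoint_left.mp hSE this hn
    · rw [hcompl]
      rintro x (h | h)
      · rcases hFmap x h with ⟨n, hn⟩
        exact Set.mem_iUnion.mpr ⟨n, hn⟩
      · exact Set.mem_iUnion.mpr ⟨0, h⟩
  have hνcompl : ν SAᶜ = ν EA := by
    rw [← hUnion, Directed.measure_iUnion (hBmono.directed_le)]
    simp [hBmeasure]
  have hνFE : ν SAᶜ = ν FA + ν EA := by
    rw [hcompl, measure_union hFE hmE]
  have hνFA : ν FA = 0 := by
    have h1 : ν FA + ν EA = ν EA := by rw [← hνFE, hνcompl]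
    have hfin : ν EA ≠ ⊤ := measure_ne_top ν EA
    exact WithTop.add_right_cancel hfin (h1.trans (zero_add (ν EA)).symm)
  have hSEcompl : (SA ∪ EA)ᶜ = FA := by
    rw [Set.compl_union]
    ext x
    simp only [Set.mem_inter_iff, Set.mem_compl_iff]
    constructor
    · rintro ⟨h1, h2⟩
      have : x ∈ SA ∪ FA ∪ EA := hcover ▸ Set.mem_univ x
      rcases this with (h | h) | h
      · exact absurd h h1
      · exact h
      · exact absurd h h2
    · intro h
      exact ⟨fun h' => Set.disjoint_left.mp hSF h' h,
             fun h' => Set.disjoint_left.mp hFE h h'⟩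
  have hfull : ν (SA ∪ EA) = 1 := by
    have := measure_add_measure_compl (μ := ν) (hmS.union hmE)
    rw [hSEcompl, hνFA, add_zero] at this
    simpa using this
  refine ⟨hfull, ?_⟩
  set l : ENNReal := ν SA with hl
  have hl1 : l ≤ 1 := prob_le_one
  have hlfin : l ≠ ⊤ := (lt_of_le_of_lt hl1 ENNReal.one_lt_top).ne
  have hνcomplval : ν SAᶜ = 1 - l := by
    rw [measure_compl hmS (measure_ne_top ν SA), measure_univ]
  refine ⟨l, (l)⁻¹ • ν.restrict SA, (1 - l)⁻¹ • ν.restrict SAᶜ, hl1, ?_, ?_, ?_⟩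
  · -- decomposition
    have h1 : l • ((l)⁻¹ • ν.restrict SA) = ν.restrict SA := by
      rcases eq_or_ne l 0 with h0 | h0
      · have : ν.restrict SA = 0 := by
          rw [Measure.restrict_eq_zero]; exact h0
        simp [this]
      · rw [smul_smul, ENNReal.mul_inv_cancel h0 hlfin, one_smul]
    have h2 : (1 - l) • ((1 - l)⁻¹ • ν.restrict SAᶜ) = ν.restrict SAᶜ := by
      rcases eq_or_ne l 1 with h1' | h1'
      · have hz : ν SAᶜ = 0 := by rw [hνcomplval, h1', tsub_self]
        have : ν.restrict SAᶜ = 0 := by rw [Measure.restrict_eq_zero]; exact hz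
        simp [this]
      · have hne : (1 : ENNReal) - l ≠ 0 := by
          intro h
          exact h1' (le_antisymm hl1 (by simpa using (tsub_eq_zero_iff_le.mp h)))
        have hfin2 : (1 : ENNReal) - l ≠ ⊤ := by
          exact (lt_of_le_of_lt tsub_le_self ENNReal.one_lt_top).ne
        rw [smul_smul, ENNReal.mul_inv_cancel hne hfin2, one_smul]
    rw [h1, h2, Measure.restrict_add_restrict_compl hmS]
  · -- μ part
    intro h0
    have hμprob : ((l)⁻¹ • ν.restrict SA) Set.univ = 1 := by
      simp only [Measure.smul_apply, smul_eq_mul, Measure.restrict_apply MeasurableSet.univ,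
        Set.univ_inter]
      rw [← hl, ENNReal.inv_mul_cancel h0 hlfin]
    refine ⟨⟨hμprob⟩, ?_, ?_⟩
    · intro Bs hBs
      simp only [Measure.smul_apply, smul_eq_mul,
        Measure.restrict_apply hBs, Measure.restrict_apply (hmeas hBs)]
      have : σ ⁻¹' Bs ∩ SA = σ ⁻¹' (Bs ∩ SA) := by
        rw [Set.preimage_inter, hSinv]
      rw [this, hinv _ (hBs.inter hmS)]
    · simp only [Measure.smul_apply, smul_eq_mul, Measure.restrict_apply hmS,
        Set.inter_self]
      rw [← hl, ENNReal.inv_mul_cancel h0 hlfin]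
  · -- ν' part
    intro h1'
    have hne : (1 : ENNReal) - l ≠ 0 := by
      intro h
      exact h1' (le_antisymm hl1 (by simpa using (tsub_eq_zero_iff_le.mp h)))
    have hfin2 : (1 : ENNReal) - l ≠ ⊤ :=
      (lt_of_le_of_lt tsub_le_self ENNReal.one_lt_top).ne
    have hprob' : ((1 - l)⁻¹ • ν.restrict SAᶜ) Set.univ = 1 := by
      simp only [Measure.smul_apply, smul_eq_mul, Measure.restrict_apply MeasurableSet.univ,
        Set.univ_inter]
      rw [hνcomplval, ENNReal.inv_mul_cancel hne hfin2]
    refine ⟨⟨hprob'⟩, ?_, ?_⟩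
    · intro Bs hBs
      simp only [Measure.smul_apply, smul_eq_mul,
        Measure.restrict_apply hBs, Measure.restrict_apply (hmeas hBs)]
      have hScinv : σ ⁻¹' SAᶜ = SAᶜ := by
        rw [Set.preimage_compl, hSinv]
      have : σ ⁻¹' Bs ∩ SAᶜ = σ ⁻¹' (Bs ∩ SAᶜ) := by
        rw [Set.preimage_inter, hScinv]
      rw [this, hinv _ (hBs.inter hmS.compl)]
    · simp only [Measure.smul_apply, smul_eq_mul, Measure.restrict_apply hmE]
      have hEsub : EA ∩ SAᶜ = EA := by
        apply Set.inter_eq_left.mpr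
        intro x hx
        exact Set.disjoint_right.mp hSE hx
      have hνEA : ν EA = 1 - l := by rw [← hνcomplval, hνcompl]
      rw [hEsub, hνEA, ENNReal.inv_mul_cancel hne hfin2]
end
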